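/- Let G be a K_{r+1}-free graph with m edges. Then ρ(G) ≤ √(2m(1 - 1/r)). -/
import Mathlib


open Matrix

/-- The real adjacency matrix of a simple graph. -/
noncomputable def adjMat {V : Type*} [Fintype V] (G : SimpleGraph V) : Matrix V V ℝ :=
  Matrix.of fun i j =>
    haveI := Classical.propDecidable (G.Adj i j)
    if G.Adj i j then (1 : ℝ) else 0

/-- The adjacency spectral radius of a finite simple graph, as the supremum of
the Rayleigh quotient of its (symmetric) adjacency matrix. -/
noncomputable def specRad {V : Type*} [Fintype V] (G : SimpleGraph V) : ℝ :=
  ⨆ x : {x : V → ℝ // x ≠ 0}, (x.1 ⬝ᵥ (adjMat G *ᵥ x.1)) / (x.1 ⬝ᵥ x.1)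

section aux
variable {V : Type*} [Fintype V] (G : SimpleGraph V)

lemma adjMat_nonneg (i j : V) : 0 ≤ adjMat G i j := by
  unfold adjMat; simp only [of_apply]; split <;> norm_num

lemma adjMat_le_one (i j : V) : adjMat G i j ≤ 1 := by
  unfold adjMat; simp only [of_apply]; split <;> norm_num

lemma adjMat_symm (i j : V) : adjMat G i j = adjMat G j i := by
  unfold adjMat; simp only [of_apply]
  rw [G.adj_comm i j]

lemma adjMat_diag (i : V) : adjMat G i i = 0 := by
  unfold adjMat; simp only [of_apply]; simp

lemma adjMat_of_not_adj {i j : V} (h : ¬ G.Adj i j) : adjMat G i j = 0 := by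
  unfold adjMat; simp only [of_apply]; simp [h]

lemma adjMat_sq (i j : V) : adjMat G i j * adjMat G i j = adjMat G i j := by
  unfold adjMat; simp only [of_apply]; split <;> norm_num

/-- The quadratic form of the adjacency matrix. -/
noncomputable def Qf (y : V → ℝ) : ℝ := ∑ i, ∑ j, adjMat G i j * y i * y j

end aux

section shift
variable {V : Type*} [Fintype V] [DecidableEq V] (G : SimpleGraph V)

lemma Qf_shift (i j : V) (hij : i ≠ j) (hadj : ¬ G.Adj i j) (y : V → ℝ) :
    Qf G (fun k => if k = i then 0 else if k = j then y j + y i else y k)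
      = Qf G y + 2 * y i * ((∑ k, adjMat G k j * y k) - (∑ k, adjMat G k i * y k)) := by
  have hji : j ≠ i := Ne.symm hij
  set c : V → ℝ := fun k => y i * ((if k = j then (1:ℝ) else 0) - (if k = i then (1:ℝ) else 0))
    with hc
  have hy' : (fun k => if k = i then (0:ℝ) else if k = j then y j + y i else y k)
      = fun k => y k + c k := by
    funext k
    by_cases h1 : k = i
    · subst h1; simp [hc, hij]
    · by_cases h2 : k = j
      · subst h2; simp [hc, h1]
      · simp [hc, h1, h2]
  rw [hy']
  have ha : ∀ k l : V, (k = i ∨ k = j) → (l = i ∨ l = j) → adjMat G k l = 0 := by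
    rintro k l (rfl | rfl) (rfl | rfl)
    · exact adjMat_diag G _
    · exact adjMat_of_not_adj G hadj
    · rw [adjMat_symm]; exact adjMat_of_not_adj G hadj
    · exact adjMat_diag G _
  have hz : ∀ k l, adjMat G k l * c k * c l = 0 := by
    intro k l
    by_cases hk1 : k = i
    · by_cases hl1 : l = i
      · rw [ha k l (Or.inl hk1) (Or.inl hl1)]; ring
      · by_cases hl2 : l = j
        · rw [ha k l (Or.inl hk1) (Or.inr hl2)]; ring
        · simp [hc, hl1, hl2]
    · by_cases hk2 : k = j
      · by_cases hl1 : l = i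
        · rw [ha k l (Or.inr hk2) (Or.inl hl1)]; ring
        · by_cases hl2 : l = j
          · rw [ha k l (Or.inr hk2) (Or.inr hl2)]; ring
          · simp [hc, hl1, hl2]
      · simp [hc, hk1, hk2]
  have hT2 : (∑ k, ∑ l, adjMat G k l * y k * c l)
      = y i * ((∑ k, adjMat G k j * y k) - (∑ k, adjMat G k i * y k)) := by
    have inner : ∀ k, ∑ l, adjMat G k l * y k * c l
        = adjMat G k j * y k * y i - adjMat G k i * y k * y i := by
      intro k
      have h1 : ∀ l, adjMat G k l * y k * c l
          = (if l = j then adjMat G k l * y k * y i else 0)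
            - (if l = i then adjMat G k l * y k * y i else 0) := by
        intro l
        simp only [hc]
        split_ifs <;> first
          | simp_all
          | ring
      simp [h1, Finset.sum_sub_distrib, Finset.sum_ite_eq']
    rw [Finset.sum_congr rfl fun k _ => inner k, Finset.sum_sub_distrib, mul_sub,
      Finset.mul_sum, Finset.mul_sum]
    congr 1 <;> exact Finset.sum_congr rfl fun k _ => by ring
  have hT3 : (∑ k, ∑ l, adjMat G k l * c k * y l)
      = y i * ((∑ k, adjMat G k j * y k) - (∑ k, adjMat G k i * y k)) := by
    have inner : ∀ k, ∑ l, adjMat G k l * c k * y l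
        = c k * ∑ l, adjMat G k l * y l := by
      intro k; rw [Finset.mul_sum]; exact Finset.sum_congr rfl fun l _ => by ring
    have h1 : ∀ k, c k * (∑ l, adjMat G k l * y l)
        = (if k = j then y i * ∑ l, adjMat G k l * y l else 0)
          - (if k = i then y i * ∑ l, adjMat G k l * y l else 0) := by
      intro k
      simp only [hc]
      split_ifs <;> first
        | simp_all
        | ring
    rw [Finset.sum_congr rfl fun k _ => (inner k).trans (h1 k), Finset.sum_sub_distrib]
    simp only [Finset.sum_ite_eq', Finset.mem_univ, if_true]
    rw [mul_sub]
    congr 1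
    · exact congrArg (fun t => y i * t) (Finset.sum_congr rfl fun l _ => by rw [adjMat_symm G j l])
    · exact congrArg (fun t => y i * t) (Finset.sum_congr rfl fun l _ => by rw [adjMat_symm G i l])
  have expand : ∀ k l, adjMat G k l * (y k + c k) * (y l + c l)
      = adjMat G k l * y k * y l + adjMat G k l * y k * c l
        + adjMat G k l * c k * y l + adjMat G k l * c k * c l := fun k l => by ring
  unfold Qf
  simp only [expand, Finset.sum_add_distrib]
  rw [hT2, hT3]
  have hT4 : (∑ k : V, ∑ l : V, adjMat G k l * c k * c l) = 0 := by
    simp [hz]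
  rw [hT4]
  ring

end shift

section MS
variable {V : Type*} [Fintype V] [DecidableEq V] (G : SimpleGraph V)

lemma Qf_le_turan (r : ℕ) (hr : 1 ≤ r) (hfree : G.CliqueFree (r + 1))
    (y : V → ℝ) (hy : ∀ i, 0 ≤ y i) :
    Qf G y ≤ (1 - 1 / (r : ℝ)) * (∑ i, y i) ^ 2 := by
  have hr0 : (0:ℝ) < r := by exact_mod_cast hr
  have hcoef : (0:ℝ) ≤ 1 - 1 / r := by
    have : (1:ℝ)/r ≤ 1 := by
      rw [div_le_one hr0]; exact_mod_cast hr
    linarith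
  suffices aux : ∀ n : ℕ, ∀ y : V → ℝ, (∀ i, 0 ≤ y i) →
      (Finset.univ.filter fun i => y i ≠ 0).card ≤ n →
      Qf G y ≤ (1 - 1 / (r : ℝ)) * (∑ i, y i) ^ 2 by
    exact aux _ y hy le_rfl
  intro n
  induction n with
  | zero =>
    intro y hy hcard
    have hy0 : ∀ i, y i = 0 := by
      intro i
      by_contra h
      have : i ∈ Finset.univ.filter fun i => y i ≠ 0 := by simp [h]
      have := Finset.card_pos.mpr ⟨i, this⟩
      omega
    have h1 : Qf G y = 0 := by
      unfold Qf; apply Finset.sum_eq_zero; intro i _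
      apply Finset.sum_eq_zero; intro j _; rw [hy0 i]; ring
    have h2 : (∑ i, y i) = 0 := Finset.sum_eq_zero fun i _ => hy0 i
    rw [h1, h2]; simp
  | succ n ih =>
    intro y hy hcard
    set S := Finset.univ.filter fun i => y i ≠ 0 with hS
    have hmemS : ∀ {i}, i ∈ S ↔ y i ≠ 0 := by intro i; simp [hS]
    by_cases hclq : ∀ p ∈ S, ∀ q ∈ S, p ≠ q → G.Adj p q
    · -- support is a clique
      have hcliq : G.IsClique ↑S := fun a ha b hb hab =>
        hclq a (by simpa using ha) b (by simpa using hb) hab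
      have hSr : S.card ≤ r := by
        by_contra h
        push_neg at h
        obtain ⟨T, hTS, hT⟩ := Finset.exists_subset_card_eq h
        exact hfree T ⟨hcliq.subset (by exact_mod_cast hTS), hT⟩
      set A := ∑ i ∈ S, y i with hA
      set B := ∑ i ∈ S, (y i) ^ 2 with hB
      have hQ : Qf G y ≤ A ^ 2 - B := by
        have inner : ∀ i, ∑ j, adjMat G i j * y i * y j = ∑ j ∈ S, adjMat G i j * y i * y j := by
          intro i
          symm
          apply Finset.sum_subset (Finset.subset_univ S)
          intro j _ hj
          have : y j = 0 := by simpa [hS] using hj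
          rw [this]; ring
        have outer : Qf G y = ∑ i ∈ S, ∑ j ∈ S, adjMat G i j * y i * y j := by
          unfold Qf
          rw [Finset.sum_congr rfl fun i _ => inner i]
          symm
          apply Finset.sum_subset (Finset.subset_univ S)
          intro i _ hi
          have : y i = 0 := by simpa [hS] using hi
          apply Finset.sum_eq_zero; intro j _; rw [this]; ring
        rw [outer]
        have hbd : ∀ i ∈ S, ∑ j ∈ S, adjMat G i j * y i * y j ≤ (∑ j ∈ S, y i * y j) - y i * y i := by
          intro i hi
          have e1 : ∑ j ∈ S, adjMat G i j * y i * y j = ∑ j ∈ S.erase i, adjMat G i j * y i * y j := by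
            symm
            apply Finset.sum_subset (Finset.erase_subset i S)
            intro j hj hj'
            have : j = i := by
              by_contra h
              exact hj' (Finset.mem_erase.mpr ⟨h, hj⟩)
            rw [this, adjMat_diag]; ring
          have e2 : ∑ j ∈ S.erase i, adjMat G i j * y i * y j ≤ ∑ j ∈ S.erase i, y i * y j := by
            apply Finset.sum_le_sum
            intro j hj
            have h1 : adjMat G i j ≤ 1 := adjMat_le_one G i j
            have h2 : 0 ≤ y i * y j := mul_nonneg (hy i) (hy j)
            calc adjMat G i j * y i * y j = adjMat G i j * (y i * y j) := by ring
              _ ≤ 1 * (y i * y j) := mul_le_mul_of_nonneg_right h1 h2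
              _ = y i * y j := one_mul _
          have e3 : ∑ j ∈ S.erase i, y i * y j = (∑ j ∈ S, y i * y j) - y i * y i :=
            Finset.sum_erase_eq_sub hi
          rw [e1]
          linarith [e2, e3.le, e3.ge]
        calc ∑ i ∈ S, ∑ j ∈ S, adjMat G i j * y i * y j
            ≤ ∑ i ∈ S, ((∑ j ∈ S, y i * y j) - y i * y i) := Finset.sum_le_sum hbd
          _ = A ^ 2 - B := by
              rw [Finset.sum_sub_distrib]
              congr 1
              · rw [hA, sq, Finset.sum_mul_sum]
              · apply Finset.sum_congr rfl; intro i _; ring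
      have hAy : A = ∑ i, y i := by
        apply Finset.sum_subset (Finset.subset_univ S)
        intro i _ hi
        simpa [hS] using hi
      rcases Finset.eq_empty_or_nonempty S with hSe | hSne
      · have hA0 : A = 0 := by rw [hA, hSe]; simp
        have hB0 : B = 0 := by rw [hB, hSe]; simp
        have : (0:ℝ) ≤ (1 - 1/(r:ℝ)) * (∑ i, y i)^2 := mul_nonneg hcoef (sq_nonneg _)
        rw [hA0, hB0] at hQ
        nlinarith [hQ]
      · have hs1 : 1 ≤ S.card := Finset.card_pos.mpr hSne
        have hs0 : (0:ℝ) < S.card := by exact_mod_cast hs1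
        have hcs : A ^ 2 ≤ (S.card : ℝ) * B := by
          have := sq_sum_le_card_mul_sum_sq (s := S) (f := y)
          exact_mod_cast this
        have hB0 : 0 ≤ B := Finset.sum_nonneg fun i _ => sq_nonneg _
        have hsr : (S.card : ℝ) ≤ r := by exact_mod_cast hSr
        have hrB : A ^ 2 ≤ (r:ℝ) * B := le_trans hcs (mul_le_mul_of_nonneg_right hsr hB0)
        have hdiv : 1 / (r:ℝ) * A ^ 2 ≤ B := by
          rw [div_mul_eq_mul_div, div_le_iff₀ hr0]
          linarith [hrB]
        have expand : (1 - 1/(r:ℝ)) * A ^ 2 = A ^ 2 - 1/(r:ℝ) * A ^ 2 := by ring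
        rw [← hAy]
        linarith
    · -- support is not a clique: shift weight
      push_neg at hclq
      obtain ⟨p, hp, q, hq, hpq, hnadj⟩ := hclq
      have key : ∀ i j, i ∈ S → j ∈ S → i ≠ j → ¬ G.Adj i j →
          (∑ k, adjMat G k i * y k) ≤ (∑ k, adjMat G k j * y k) →
          Qf G y ≤ (1 - 1/(r:ℝ)) * (∑ i, y i)^2 := by
        intro i j hiS hjS hij hna hle
        set y' : V → ℝ := fun k => if k = i then 0 else if k = j then y j + y i else y k with hy'
        have hy'nn : ∀ k, 0 ≤ y' k := by
          intro k
          simp only [hy']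
          split_ifs
          · exact le_refl 0
          · exact add_nonneg (hy j) (hy i)
          · exact hy k
        have hsum : ∑ k, y' k = ∑ k, y k := by
          have hd : ∀ k, y' k - y k = (if k = j then y i else 0) - (if k = i then y i else 0) := by
            intro k
            simp only [hy']
            split_ifs <;> first | simp_all | ring
          have h2 : ∑ k, (y' k - y k) = 0 := by
            rw [Finset.sum_congr rfl fun k _ => hd k, Finset.sum_sub_distrib]
            simp [Finset.sum_ite_eq']
          rw [Finset.sum_sub_distrib] at h2
          linarith
        have hcard' : (Finset.univ.filter fun k => y' k ≠ 0).card ≤ n := by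
          have hsub : (Finset.univ.filter fun k => y' k ≠ 0) ⊆ S.erase i := by
            intro k hk
            simp only [Finset.mem_filter, Finset.mem_univ, true_and] at hk
            rcases eq_or_ne k i with rfl | hki
            · exact absurd (by simp [hy']) hk
            · rw [Finset.mem_erase]
              refine ⟨hki, ?_⟩
              rcases eq_or_ne k j with rfl | hkj
              · exact hjS
              · rw [hmemS]
                intro h0
                apply hk
                simp [hy', hki, hkj, h0]
          have h1 : 1 ≤ S.card := Finset.card_pos.mpr ⟨i, hiS⟩
          calc (Finset.univ.filter fun k => y' k ≠ 0).card
              ≤ (S.erase i).card := Finset.card_le_card hsub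
            _ = S.card - 1 := Finset.card_erase_of_mem hiS
            _ ≤ n := by omega
        have hQ' := ih y' hy'nn hcard'
        rw [hsum] at hQ'
        have hshift := Qf_shift G i j hij hna y
        have hpos : 0 ≤ 2 * y i * ((∑ k, adjMat G k j * y k) - (∑ k, adjMat G k i * y k)) := by
          apply mul_nonneg
          · apply mul_nonneg; norm_num; exact hy i
          · linarith
        have hQle : Qf G y ≤ Qf G y' := by
          have : Qf G y' = Qf G y + 2 * y i * ((∑ k, adjMat G k j * y k) - (∑ k, adjMat G k i * y k)) := hshift
          linarith
        linarith
      have hnadj' : ¬ G.Adj q p := fun h => hnadj h.symm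
      rcases le_total (∑ k, adjMat G k p * y k) (∑ k, adjMat G k q * y k) with h | h
      · exact key p q hp hq hpq hnadj h
      · exact key q p hq hp hpq.symm hnadj' h

end MS

section final
variable {V : Type*} [Fintype V]

lemma adjMat_double_sum (G : SimpleGraph V) :
    ∑ i, ∑ j, adjMat G i j = 2 * (G.edgeSet.ncard : ℝ) := by
  classical
  have h1 : ∀ i, ∑ j, adjMat G i j = (G.degree i : ℝ) := by
    intro i
    rw [SimpleGraph.degree, SimpleGraph.neighborFinset_eq_filter, Finset.card_filter]
    push_cast
    apply Finset.sum_congr rfl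
    intro j _
    unfold adjMat
    simp only [Matrix.of_apply]
  rw [Finset.sum_congr rfl fun i _ => h1 i, ← Nat.cast_sum,
    SimpleGraph.sum_degrees_eq_twice_card_edges, ← Set.ncard_coe_finset,
    SimpleGraph.coe_edgeFinset]
  push_cast
  ring

lemma rayleigh_bound (G : SimpleGraph V) (m r : ℕ) (hr : 1 ≤ r)
    (hfree : G.CliqueFree (r + 1)) (hm : G.edgeSet.ncard = m) (x : V → ℝ) :
    x ⬝ᵥ (adjMat G *ᵥ x) ≤ Real.sqrt (2 * m * (1 - 1 / (r : ℝ))) * (x ⬝ᵥ x) := by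
  classical
  have hr0 : (0:ℝ) < r := by exact_mod_cast hr
  have hcoef : (0:ℝ) ≤ 1 - 1 / r := by
    have : (1:ℝ)/r ≤ 1 := by rw [div_le_one hr0]; exact_mod_cast hr
    linarith
  have hdot : x ⬝ᵥ (adjMat G *ᵥ x) = ∑ i, ∑ j, adjMat G i j * x i * x j := by
    unfold dotProduct Matrix.mulVec dotProduct
    apply Finset.sum_congr rfl
    intro i _
    rw [Finset.mul_sum]
    apply Finset.sum_congr rfl
    intro j _
    ring
  set F : ℝ := ∑ i, ∑ j, adjMat G i j * |x i| * |x j| with hF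
  have hstep1 : x ⬝ᵥ (adjMat G *ᵥ x) ≤ F := by
    rw [hdot, hF]
    apply Finset.sum_le_sum
    intro i _
    apply Finset.sum_le_sum
    intro j _
    have h1 : x i * x j ≤ |x i| * |x j| := by
      rw [← abs_mul]; exact le_abs_self _
    calc adjMat G i j * x i * x j = adjMat G i j * (x i * x j) := by ring
      _ ≤ adjMat G i j * (|x i| * |x j|) :=
          mul_le_mul_of_nonneg_left h1 (adjMat_nonneg G i j)
      _ = adjMat G i j * |x i| * |x j| := by ring
  have hFnn : 0 ≤ F := by
    rw [hF]
    apply Finset.sum_nonneg; intro i _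
    apply Finset.sum_nonneg; intro j _
    have := adjMat_nonneg G i j
    positivity
  -- Cauchy-Schwarz
  set f : V × V → ℝ := fun p => adjMat G p.1 p.2 with hf
  set g : V × V → ℝ := fun p => adjMat G p.1 p.2 * (|x p.1| * |x p.2|) with hg
  have hFfg : F = ∑ p : V × V, f p * g p := by
    rw [hF, Fintype.sum_prod_type]
    apply Finset.sum_congr rfl; intro i _
    apply Finset.sum_congr rfl; intro j _
    simp only [hf, hg]
    rw [show adjMat G i j * (adjMat G i j * (|x i| * |x j|))
        = adjMat G i j * adjMat G i j * (|x i| * |x j|) by ring, adjMat_sq]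
    ring
  have hcs := Finset.sum_mul_sq_le_sq_mul_sq Finset.univ f g
  have hf2 : ∑ p : V × V, f p ^ 2 = 2 * (m : ℝ) := by
    rw [Fintype.sum_prod_type]
    have : ∀ i j : V, f (i, j) ^ 2 = adjMat G i j := by
      intro i j; simp only [hf]; rw [sq, adjMat_sq]
    calc ∑ i, ∑ j, f (i, j) ^ 2 = ∑ i, ∑ j, adjMat G i j := by
          apply Finset.sum_congr rfl; intro i _
          apply Finset.sum_congr rfl; intro j _
          exact this i j
      _ = 2 * (G.edgeSet.ncard : ℝ) := adjMat_double_sum G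
      _ = 2 * (m : ℝ) := by rw [hm]
  have hg2 : ∑ p : V × V, g p ^ 2 ≤ (1 - 1/(r:ℝ)) * (x ⬝ᵥ x) ^ 2 := by
    have hgq : ∑ p : V × V, g p ^ 2 = Qf G (fun i => x i ^ 2) := by
      unfold Qf
      rw [Fintype.sum_prod_type]
      apply Finset.sum_congr rfl; intro i _
      apply Finset.sum_congr rfl; intro j _
      simp only [hg]
      rw [mul_pow, mul_pow, sq (adjMat G i j), adjMat_sq, sq_abs, sq_abs]
      ring
    have hms := Qf_le_turan (V := V) G r hr hfree (fun i => x i ^ 2) (fun i => sq_nonneg _)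
    rw [hgq]
    have hxx : x ⬝ᵥ x = ∑ i, x i ^ 2 := by
      unfold dotProduct
      apply Finset.sum_congr rfl; intro i _; ring
    rw [hxx]
    exact hms
  have hg2nn : (0:ℝ) ≤ ∑ p : V × V, g p ^ 2 :=
    Finset.sum_nonneg fun p _ => sq_nonneg _
  have hxxnn : 0 ≤ x ⬝ᵥ x := by
    unfold dotProduct
    exact Finset.sum_nonneg fun i _ => mul_self_nonneg _
  have hF2 : F ^ 2 ≤ (2 * (m:ℝ) * (1 - 1/(r:ℝ))) * (x ⬝ᵥ x) ^ 2 := by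
    rw [hFfg]
    calc (∑ p : V × V, f p * g p) ^ 2
        ≤ (∑ p : V × V, f p ^ 2) * (∑ p : V × V, g p ^ 2) := hcs
      _ ≤ (2 * (m:ℝ)) * ((1 - 1/(r:ℝ)) * (x ⬝ᵥ x) ^ 2) := by
          rw [hf2]
          apply mul_le_mul_of_nonneg_left hg2 (by positivity)
      _ = (2 * (m:ℝ) * (1 - 1/(r:ℝ))) * (x ⬝ᵥ x) ^ 2 := by ring
  calc x ⬝ᵥ (adjMat G *ᵥ x) ≤ F := hstep1
    _ = Real.sqrt (F ^ 2) := (Real.sqrt_sq hFnn).symm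
    _ ≤ Real.sqrt ((2 * (m:ℝ) * (1 - 1/(r:ℝ))) * (x ⬝ᵥ x) ^ 2) := Real.sqrt_le_sqrt hF2
    _ = Real.sqrt (2 * (m:ℝ) * (1 - 1/(r:ℝ))) * Real.sqrt ((x ⬝ᵥ x) ^ 2) := by
        rw [Real.sqrt_mul (by positivity)]
    _ = Real.sqrt (2 * (m:ℝ) * (1 - 1/(r:ℝ))) * (x ⬝ᵥ x) := by
        rw [Real.sqrt_sq hxxnn]

end final

/-- Nikiforov's spectral Turán bound: a `K_{r+1}`-free graph with `m` edges has
spectral radius at most `√(2m(1 - 1/r))`. -/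
theorem stmt_10 {V : Type*} [Fintype V] (G : SimpleGraph V) (m r : ℕ) (hr : 1 ≤ r)
    (hfree : G.CliqueFree (r + 1)) (hm : G.edgeSet.ncard = m) :
    specRad G ≤ Real.sqrt (2 * m * (1 - 1 / (r : ℝ))) := by
  classical
  rcases isEmpty_or_nonempty {x : V → ℝ // x ≠ 0} with he | hne
  · rw [specRad, Real.iSup_of_isEmpty]
    exact Real.sqrt_nonneg _
  · rw [specRad]
    apply ciSup_le
    rintro ⟨x, hx⟩
    have hxxnn : 0 ≤ x ⬝ᵥ x := Finset.sum_nonneg fun i _ => mul_self_nonneg _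
    have hxxpos : 0 < x ⬝ᵥ x := by
      rcases lt_or_eq_of_le hxxnn with h | h
      · exact h
      · exfalso
        apply hx
        funext i
        have h0 : ∑ j, x j * x j = 0 := h.symm
        have := (Finset.sum_eq_zero_iff_of_nonneg
          (fun j _ => mul_self_nonneg (x j))).mp h0 i (Finset.mem_univ i)
        have := mul_self_eq_zero.mp this
        simpa using this
    rw [div_le_iff₀ hxxpos]
    exact rayleigh_bound G m r hr hfree hm x
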